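/- arXiv:2511.13554 — 3 statements merged into one kernel-verified Lean document; each statement's English description precedes it below -/
import Mathlib

section
/- Let ξ ~ Normal(0,1), Y = ξ², X = μ + μ²Y/(2λ) − (μ/(2λ))·sqrt(4μλY + μ²Y²), η ~ Uniform(0,1) independent of ξ, and define IG = X if η ≤ μ/(μ+X) and IG = μ²/X otherwise. Then IG has the Inverse Gaussian distribution with parameters (μ, λ). -/
open MeasureTheory ProbabilityTheory

/-- The density of the Inverse Gaussian distribution `IG(m, l)` on `(0,∞)`. -/
noncomputable def invGaussianDensity (m l x : ℝ) : ℝ :=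
  Real.sqrt (l / (2 * Real.pi * x ^ 3)) * Real.exp (-l * (x - m) ^ 2 / (2 * m ^ 2 * x))

/-- The Inverse Gaussian distribution `IG(m, l)` as a measure on `ℝ`. -/
noncomputable def invGaussianMeasure (m l : ℝ) : Measure ℝ :=
  (volume.restrict (Set.Ioi (0 : ℝ))).withDensity
    (fun x => ENNReal.ofReal (invGaussianDensity m l x))

namespace MSH

open Set Real

noncomputable def a0 (m l s : ℝ) : ℝ :=
  m + m ^ 2 * s ^ 2 / (2 * l) - m / (2 * l) * Real.sqrt (4 * m * l * s ^ 2 + m ^ 2 * (s ^ 2) ^ 2)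

noncomputable def psi (m l x : ℝ) : ℝ := Real.sqrt l * (m - x) / (m * Real.sqrt x)

noncomputable def psid (m l x : ℝ) : ℝ :=
  -(Real.sqrt l * (m + x) / (2 * m * x * Real.sqrt x))

variable {m l : ℝ}

lemma rad_nonneg (hm : 0 < m) (hl : 0 < l) (s : ℝ) :
    0 ≤ 4 * m * l * s ^ 2 + m ^ 2 * (s ^ 2) ^ 2 := by positivity

lemma a0_pos (hm : 0 < m) (hl : 0 < l) (s : ℝ) : 0 < a0 m l s := by
  have h2l : (0:ℝ) < 2 * l := by linarith
  have hD : Real.sqrt (4 * m * l * s ^ 2 + m ^ 2 * (s ^ 2) ^ 2) < 2 * l + m * s ^ 2 := by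
    rw [Real.sqrt_lt' (by positivity)]
    nlinarith [sq_nonneg s]
  have key : m / (2 * l) * Real.sqrt (4 * m * l * s ^ 2 + m ^ 2 * (s ^ 2) ^ 2)
      < m + m ^ 2 * s ^ 2 / (2 * l) := by
    have h1 : m / (2 * l) * Real.sqrt (4 * m * l * s ^ 2 + m ^ 2 * (s ^ 2) ^ 2)
        < m / (2 * l) * (2 * l + m * s ^ 2) :=
      mul_lt_mul_of_pos_left hD (by positivity)
    have h2 : m / (2 * l) * (2 * l + m * s ^ 2) = m + m ^ 2 * s ^ 2 / (2 * l) := by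
      field_simp
    linarith
  rw [a0]; linarith

lemma a0_le (hm : 0 < m) (hl : 0 < l) (s : ℝ) : a0 m l s ≤ m := by
  have h2l : (0:ℝ) < 2 * l := by linarith
  have hD : m * s ^ 2 ≤ Real.sqrt (4 * m * l * s ^ 2 + m ^ 2 * (s ^ 2) ^ 2) := by
    rw [Real.le_sqrt (by positivity) (rad_nonneg hm hl s)]
    nlinarith [sq_nonneg s, mul_nonneg (mul_pos hm hl).le (sq_nonneg s)]
  have key : m ^ 2 * s ^ 2 / (2 * l)
      ≤ m / (2 * l) * Real.sqrt (4 * m * l * s ^ 2 + m ^ 2 * (s ^ 2) ^ 2) := by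
    have h1 : m / (2 * l) * (m * s ^ 2)
        ≤ m / (2 * l) * Real.sqrt (4 * m * l * s ^ 2 + m ^ 2 * (s ^ 2) ^ 2) :=
      mul_le_mul_of_nonneg_left hD (by positivity)
    have h2 : m / (2 * l) * (m * s ^ 2) = m ^ 2 * s ^ 2 / (2 * l) := by
      field_simp
    linarith
  rw [a0]; linarith

lemma a0_lt (hm : 0 < m) (hl : 0 < l) {s : ℝ} (hs : s ≠ 0) : a0 m l s < m := by
  have h2l : (0:ℝ) < 2 * l := by linarith
  have hs2 : (0:ℝ) < 4 * m * l * s ^ 2 := by positivity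
  have hD : m * s ^ 2 < Real.sqrt (4 * m * l * s ^ 2 + m ^ 2 * (s ^ 2) ^ 2) := by
    rw [Real.lt_sqrt (by positivity)]
    nlinarith
  have key : m ^ 2 * s ^ 2 / (2 * l)
      < m / (2 * l) * Real.sqrt (4 * m * l * s ^ 2 + m ^ 2 * (s ^ 2) ^ 2) := by
    have h1 : m / (2 * l) * (m * s ^ 2)
        < m / (2 * l) * Real.sqrt (4 * m * l * s ^ 2 + m ^ 2 * (s ^ 2) ^ 2) :=
      mul_lt_mul_of_pos_left hD (by positivity)
    have h2 : m / (2 * l) * (m * s ^ 2) = m ^ 2 * s ^ 2 / (2 * l) := by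
      field_simp
    linarith
  rw [a0]; linarith

lemma a0_eq (hm : 0 < m) (hl : 0 < l) (s : ℝ) :
    l * (a0 m l s - m) ^ 2 = m ^ 2 * s ^ 2 * a0 m l s := by
  have hD2 : (Real.sqrt (4 * m * l * s ^ 2 + m ^ 2 * (s ^ 2) ^ 2)) ^ 2
      = 4 * m * l * s ^ 2 + m ^ 2 * (s ^ 2) ^ 2 := Real.sq_sqrt (rad_nonneg hm hl s)
  have h2l : (2 * l : ℝ) ≠ 0 := by positivity
  rw [a0]
  generalize Real.sqrt (4 * m * l * s ^ 2 + m ^ 2 * (s ^ 2) ^ 2) = D at hD2 ⊢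
  field_simp
  linear_combination hD2

lemma a0_neg (m l s : ℝ) : a0 m l (-s) = a0 m l s := by simp [a0]

lemma a0_continuous (m l : ℝ) : Continuous (a0 m l) := by
  unfold a0
  have h : Continuous fun s : ℝ => Real.sqrt (4 * m * l * s ^ 2 + m ^ 2 * (s ^ 2) ^ 2) :=
    Real.continuous_sqrt.comp (by continuity)
  continuity

lemma psi_sq (hm : 0 < m) (hl : 0 < l) {x : ℝ} (hx : 0 < x) :
    psi m l x ^ 2 = l * (m - x) ^ 2 / (m ^ 2 * x) := by
  rw [psi, div_pow, mul_pow, mul_pow, Real.sq_sqrt hl.le, Real.sq_sqrt hx.le]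

lemma psi_pos (hm : 0 < m) (hl : 0 < l) {x : ℝ} (hx : x ∈ Ioo 0 m) : 0 < psi m l x := by
  have hsx : 0 < Real.sqrt x := Real.sqrt_pos.mpr hx.1
  have hsl : 0 < Real.sqrt l := Real.sqrt_pos.mpr hl
  exact div_pos (mul_pos hsl (by linarith [hx.2])) (mul_pos hm hsx)

lemma psi_nonneg (hm : 0 < m) (hl : 0 < l) {x : ℝ} (hx : 0 < x) (hxm : x ≤ m) :
    0 ≤ psi m l x := by
  have hsx : 0 < Real.sqrt x := Real.sqrt_pos.mpr hx
  have hsl : 0 ≤ Real.sqrt l := Real.sqrt_nonneg l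
  exact div_nonneg (mul_nonneg hsl (by linarith)) (mul_pos hm hsx).le

lemma psi_a0 (hm : 0 < m) (hl : 0 < l) {s : ℝ} (hs : 0 ≤ s) : psi m l (a0 m l s) = s := by
  have ha : 0 < a0 m l s := a0_pos hm hl s
  have ham : a0 m l s ≤ m := a0_le hm hl s
  have h1 : psi m l (a0 m l s) ^ 2 = s ^ 2 := by
    rw [psi_sq hm hl ha]
    have := a0_eq hm hl s
    have hne : m ^ 2 * a0 m l s ≠ 0 := by positivity
    rw [div_eq_iff hne]
    linear_combination this
  have h0 : 0 ≤ psi m l (a0 m l s) := psi_nonneg hm hl ha ham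
  rw [← Real.sqrt_sq h0, h1, Real.sqrt_sq hs]

lemma a0_psi (hm : 0 < m) (hl : 0 < l) {x : ℝ} (hx : x ∈ Ioo 0 m) :
    a0 m l (psi m l x) = x := by
  obtain ⟨hx0, hxm⟩ := hx
  set s := psi m l x with hsdef
  set a := a0 m l s with hadef
  have ha_pos : 0 < a := a0_pos hm hl s
  have ha_le : a ≤ m := a0_le hm hl s
  have h1 : l * (a - m) ^ 2 = m ^ 2 * s ^ 2 * a := a0_eq hm hl s
  have hs2 : s ^ 2 = l * (m - x) ^ 2 / (m ^ 2 * x) := psi_sq hm hl hx0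
  have h2 : l * (x - m) ^ 2 = m ^ 2 * s ^ 2 * x := by
    rw [hs2]; field_simp; ring
  have hfac : (a - x) * (l * (a + x) - 2 * l * m - m ^ 2 * s ^ 2) = 0 := by
    linear_combination h1 - h2
  rcases mul_eq_zero.mp hfac with h | h
  · linarith
  · exfalso
    have hs2n : 0 ≤ s ^ 2 := sq_nonneg s
    nlinarith

lemma psi_image (hm : 0 < m) (hl : 0 < l) : psi m l '' Ioo 0 m = Ioi 0 := by
  ext s
  constructor
  · rintro ⟨x, hx, rfl⟩
    exact psi_pos hm hl hx
  · intro hs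
    have hs0 : (0:ℝ) < s := hs
    refine ⟨a0 m l s, ⟨a0_pos hm hl s, a0_lt hm hl hs0.ne'⟩, psi_a0 hm hl hs0.le⟩

lemma psi_injOn (hm : 0 < m) (hl : 0 < l) : InjOn (psi m l) (Ioo 0 m) := by
  intro x hx y hy h
  rw [← a0_psi hm hl hx, h, a0_psi hm hl hy]

lemma psi_hasDeriv (hm : 0 < m) (hl : 0 < l) {x : ℝ} (hx : x ∈ Ioo 0 m) :
    HasDerivAt (psi m l) (psid m l x) x := by
  have hx0 : 0 < x := hx.1
  have hsx : 0 < Real.sqrt x := Real.sqrt_pos.mpr hx0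
  have hu : HasDerivAt (fun y : ℝ => Real.sqrt l * (m - y)) (-Real.sqrt l) x := by
    simpa using ((hasDerivAt_id x).const_sub m).const_mul (Real.sqrt l)
  have hv : HasDerivAt (fun y : ℝ => m * Real.sqrt y) (m * (1 / (2 * Real.sqrt x))) x :=
    (Real.hasDerivAt_sqrt hx0.ne').const_mul m
  have hvne : m * Real.sqrt x ≠ 0 := by positivity
  have := hu.div hv hvne
  refine this.congr_deriv ?_
  rw [psid]
  obtain ⟨u, hu'⟩ : ∃ u, Real.sqrt x = u := ⟨_, rfl⟩
  have hu0 : 0 < u := hu' ▸ hsx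
  have hx_eq : x = u ^ 2 := by rw [← hu', Real.sq_sqrt hx0.le]
  rw [hu', hx_eq]
  field_simp
  ring

lemma abs_psid (hm : 0 < m) (hl : 0 < l) {x : ℝ} (hx : 0 < x) :
    |psid m l x| = Real.sqrt l * (m + x) / (2 * m * x * Real.sqrt x) := by
  rw [psid, abs_neg, abs_of_nonneg]
  have hsx : 0 < Real.sqrt x := Real.sqrt_pos.mpr hx
  positivity

lemma psid_measurable (m l : ℝ) : Measurable (psid m l) := by
  apply Measurable.neg
  exact (measurable_const.mul (measurable_const.add measurable_id)).div
    ((measurable_const.mul measurable_id).mul Real.continuous_sqrt.measurable)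

lemma psi_measurable (m l : ℝ) : Measurable (psi m l) := by
  exact (measurable_const.mul (measurable_const.sub measurable_id)).div
    (measurable_const.mul Real.continuous_sqrt.measurable)

lemma exp_arg (hm : 0 < m) (hl : 0 < l) {x : ℝ} (hx : 0 < x) :
    -psi m l x ^ 2 / 2 = -l * (x - m) ^ 2 / (2 * m ^ 2 * x) := by
  rw [psi_sq hm hl hx]
  have h1 : (m:ℝ) ^ 2 * x ≠ 0 := by positivity
  field_simp
  ring

lemma pdf_psi (hm : 0 < m) (hl : 0 < l) {x : ℝ} (hx : 0 < x) :
    gaussianPDFReal 0 1 (psi m l x)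
      = (Real.sqrt (2 * π))⁻¹ * Real.exp (-l * (x - m) ^ 2 / (2 * m ^ 2 * x)) := by
  simp only [gaussianPDFReal, NNReal.coe_one, mul_one, sub_zero]
  rw [exp_arg hm hl hx]

lemma sqrt_pref1 (hm : 0 < m) (hl : 0 < l) {x : ℝ} (hx : 0 < x) :
    Real.sqrt (l / (2 * π * x ^ 3))
      = Real.sqrt l / (Real.sqrt (2 * π) * (x * Real.sqrt x)) := by
  have hpi : (0:ℝ) < 2 * π := by positivity
  have h1 : (Real.sqrt l) ^ 2 = l := Real.sq_sqrt hl.le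
  have h2 : (Real.sqrt (2 * π)) ^ 2 = 2 * π := Real.sq_sqrt hpi.le
  have h3 : (Real.sqrt x) ^ 2 = x := Real.sq_sqrt hx.le
  have hsx : 0 < Real.sqrt x := Real.sqrt_pos.mpr hx
  have hs2 : 0 < Real.sqrt (2 * π) := Real.sqrt_pos.mpr hpi
  have key : (Real.sqrt l / (Real.sqrt (2 * π) * (x * Real.sqrt x))) ^ 2
      = l / (2 * π * x ^ 3) := by
    rw [div_pow, mul_pow, mul_pow, h1, h2, h3]
    ring
  rw [← key]
  exact Real.sqrt_sq (by positivity)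

lemma sqrt_pref2 (hm : 0 < m) (hl : 0 < l) {x : ℝ} (hx : 0 < x) :
    Real.sqrt (l / (2 * π * (m ^ 2 / x) ^ 3))
      = Real.sqrt l * (x * Real.sqrt x) / (Real.sqrt (2 * π) * m ^ 3) := by
  have hpi : (0:ℝ) < 2 * π := by positivity
  have h1 : (Real.sqrt l) ^ 2 = l := Real.sq_sqrt hl.le
  have h2 : (Real.sqrt (2 * π)) ^ 2 = 2 * π := Real.sq_sqrt hpi.le
  have h3 : (Real.sqrt x) ^ 2 = x := Real.sq_sqrt hx.le
  have hsx : 0 < Real.sqrt x := Real.sqrt_pos.mpr hx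
  have hs2 : 0 < Real.sqrt (2 * π) := Real.sqrt_pos.mpr hpi
  have key : (Real.sqrt l * (x * Real.sqrt x) / (Real.sqrt (2 * π) * m ^ 3)) ^ 2
      = l / (2 * π * (m ^ 2 / x) ^ 3) := by
    rw [div_pow, mul_pow, mul_pow, mul_pow, h1, h2, h3]
    field_simp
  rw [← key]
  exact Real.sqrt_sq (by positivity)

lemma exp_arg2 (hm : 0 < m) (hl : 0 < l) {x : ℝ} (hx : 0 < x) :
    -l * (m ^ 2 / x - m) ^ 2 / (2 * m ^ 2 * (m ^ 2 / x)) = -l * (x - m) ^ 2 / (2 * m ^ 2 * x) := by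
  field_simp
  ring

lemma real1 (hm : 0 < m) (hl : 0 < l) {x : ℝ} (hx : x ∈ Ioo 0 m) :
    2 * (|psid m l x| * gaussianPDFReal 0 1 (psi m l x) * (m / (m + x)))
      = invGaussianDensity m l x := by
  have hx0 : 0 < x := hx.1
  rw [abs_psid hm hl hx0, pdf_psi hm hl hx0, invGaussianDensity, sqrt_pref1 hm hl hx0]
  have hsx : 0 < Real.sqrt x := Real.sqrt_pos.mpr hx0
  have hs2 : 0 < Real.sqrt (2 * π) := Real.sqrt_pos.mpr (by positivity)
  have hmx : (0:ℝ) < m + x := by linarith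
  field_simp

lemma real2 (hm : 0 < m) (hl : 0 < l) {x : ℝ} (hx : x ∈ Ioo 0 m) :
    2 * (|psid m l x| * gaussianPDFReal 0 1 (psi m l x) * (1 - m / (m + x)))
      = m ^ 2 / x ^ 2 * invGaussianDensity m l (m ^ 2 / x) := by
  have hx0 : 0 < x := hx.1
  have hmx : (0:ℝ) < m + x := by linarith
  rw [show 1 - m / (m + x) = x / (m + x) by field_simp; ring,
    abs_psid hm hl hx0, pdf_psi hm hl hx0, invGaussianDensity, sqrt_pref2 hm hl hx0,
    exp_arg2 hm hl hx0]
  have hsx : 0 < Real.sqrt x := Real.sqrt_pos.mpr hx0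
  have hs2 : 0 < Real.sqrt (2 * π) := Real.sqrt_pos.mpr (by positivity)
  obtain ⟨u, hu⟩ : ∃ u, Real.sqrt x = u := ⟨_, rfl⟩
  have hu0 : 0 < u := hu ▸ hsx
  have hx_eq : x = u ^ 2 := by rw [← hu, Real.sq_sqrt hx0.le]
  rw [hu, hx_eq]
  field_simp

lemma invGaussianDensity_nonneg (m l x : ℝ) : 0 ≤ invGaussianDensity m l x :=
  mul_nonneg (Real.sqrt_nonneg _) (Real.exp_pos _).le

/-- One-dimensional change of variables for the Lebesgue integral. -/
lemma lintegral_cov {s : Set ℝ} {f f' : ℝ → ℝ}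
    (hs : MeasurableSet s) (hf' : ∀ x ∈ s, HasDerivWithinAt f (f' x) s x)
    (hf : Set.InjOn f s) (g : ℝ → ENNReal) :
    ∫⁻ x in f '' s, g x = ∫⁻ x in s, ENNReal.ofReal |f' x| * g (f x) := by
  simpa only [ContinuousLinearMap.det_toSpanSingleton] using
    MeasureTheory.lintegral_image_eq_lintegral_abs_det_fderiv_mul volume hs
      (fun x hx => (hf' x hx).hasFDerivWithinAt) hf g

lemma unif_apply {c : ℝ} (hc0 : 0 ≤ c) (hc1 : c ≤ 1) (a b : ℝ) {A : Set ℝ}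
    (hA : MeasurableSet A) :
    (volume.restrict (Icc (0:ℝ) 1)) {t | (if t ≤ c then a else b) ∈ A}
      = A.indicator 1 a * ENNReal.ofReal c + A.indicator 1 b * ENNReal.ofReal (1 - c) := by
  by_cases ha : a ∈ A <;> by_cases hb : b ∈ A
  · have hset : {t : ℝ | (if t ≤ c then a else b) ∈ A} = Set.univ := by
      ext t; simp only [Set.mem_setOf_eq, Set.mem_univ, iff_true]
      split <;> assumption
    rw [hset, Set.indicator_of_mem ha, Set.indicator_of_mem hb]
    simp only [Pi.one_apply, one_mul]
    rw [Measure.restrict_apply_univ, Real.volume_Icc,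
      ← ENNReal.ofReal_add hc0 (by linarith)]
    norm_num
  · have hset : {t : ℝ | (if t ≤ c then a else b) ∈ A} = Iic c := by
      ext t; simp only [Set.mem_setOf_eq, Set.mem_Iic]
      split <;> simp_all
    rw [hset, Set.indicator_of_mem ha, Set.indicator_of_notMem hb,
      Measure.restrict_apply measurableSet_Iic]
    have : Iic c ∩ Icc (0:ℝ) 1 = Icc 0 c := by
      ext t
      simp only [Set.mem_inter_iff, Set.mem_Iic, Set.mem_Icc]
      constructor
      · rintro ⟨h1, h2, _⟩; exact ⟨h2, h1⟩
      · rintro ⟨h1, h2⟩; exact ⟨h2, h1, by linarith⟩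
    rw [this, Real.volume_Icc]
    simp
  · have hset : {t : ℝ | (if t ≤ c then a else b) ∈ A} = Ioi c := by
      ext t; simp only [Set.mem_setOf_eq, Set.mem_Ioi, ← not_le]
      split <;> simp_all
    rw [hset, Set.indicator_of_notMem ha, Set.indicator_of_mem hb,
      Measure.restrict_apply measurableSet_Ioi]
    have : Ioi c ∩ Icc (0:ℝ) 1 = Ioc c 1 := by
      ext t
      simp only [Set.mem_inter_iff, Set.mem_Ioi, Set.mem_Icc, Set.mem_Ioc]
      constructor
      · rintro ⟨h1, _, h2⟩; exact ⟨h1, h2⟩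
      · rintro ⟨h1, h2⟩; exact ⟨h1, by linarith, h2⟩
    rw [this, Real.volume_Ioc]
    simp
  · have hset : {t : ℝ | (if t ≤ c then a else b) ∈ A} = ∅ := by
      ext t; simp only [Set.mem_setOf_eq, Set.mem_empty_iff_false, iff_false]
      split <;> assumption
    rw [hset, Set.indicator_of_notMem ha, Set.indicator_of_notMem hb]
    simp

lemma double_ofReal {r : ℝ} (hr : 0 ≤ r) :
    ENNReal.ofReal r + ENNReal.ofReal r = ENNReal.ofReal (2 * r) := by
  rw [← ENNReal.ofReal_add hr hr, two_mul]

end MSH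

open MSH Set

/-- Michael–Schucany–Haas sampling: if `ξ ~ N(0,1)`, `Y = ξ²`,
`X = μ + μ²Y/(2λ) − (μ/(2λ))√(4μλY + μ²Y²)`, and `η ~ U(0,1)` is independent of `ξ`,
then `IG := X` if `η ≤ μ/(μ+X)` and `IG := μ²/X` otherwise, has law `IG(μ, λ)`. -/
theorem michael_schucany_haas (m l : ℝ) (hm : 0 < m) (hl : 0 < l)
    {Ω : Type*} [MeasurableSpace Ω] (P : Measure Ω) [IsProbabilityMeasure P]
    (ξ η : Ω → ℝ) (hξ : Measurable ξ) (hη : Measurable η)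
    (hξlaw : Measure.map ξ P = gaussianReal 0 1)
    (hηlaw : Measure.map η P = volume.restrict (Set.Icc (0 : ℝ) 1))
    (hindep : IndepFun ξ η P)
    (Y X IG : Ω → ℝ)
    (hY : ∀ ω, Y ω = (ξ ω) ^ 2)
    (hX : ∀ ω, X ω = m + m ^ 2 * Y ω / (2 * l)
        - (m / (2 * l)) * Real.sqrt (4 * m * l * Y ω + m ^ 2 * (Y ω) ^ 2))
    (hIG : ∀ ω, IG ω = if η ω ≤ m / (m + X ω) then X ω else m ^ 2 / X ω) :
    Measure.map IG P = invGaussianMeasure m l := by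
  classical
  set ν : Measure ℝ := volume.restrict (Set.Icc (0:ℝ) 1) with hν
  set F : ℝ × ℝ → ℝ := fun p =>
    if p.2 ≤ m / (m + a0 m l p.1) then a0 m l p.1 else m ^ 2 / a0 m l p.1 with hFdef
  have ha0m : Measurable (a0 m l) := (a0_continuous m l).measurable
  have hFmeas : Measurable F := by
    apply Measurable.ite
    · exact measurableSet_le measurable_snd
        (measurable_const.div ((measurable_const.add ha0m).comp measurable_fst))
    · exact ha0m.comp measurable_fst
    · exact measurable_const.div (ha0m.comp measurable_fst)
  have hXa : ∀ ω, X ω = a0 m l (ξ ω) := fun ω => by rw [hX, hY]; rfl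
  have hIGF : IG = F ∘ fun ω => (ξ ω, η ω) := funext fun ω => by
    simp only [Function.comp_apply, hFdef]
    rw [hIG, hXa ω]
  have hpair : Measure.map (fun ω => (ξ ω, η ω)) P = (gaussianReal 0 1).prod ν := by
    rw [← hξlaw, ← hηlaw]
    exact (indepFun_iff_map_prod_eq_prod_map_map hξ.aemeasurable hη.aemeasurable).mp hindep
  have hmapIG : Measure.map IG P = Measure.map F ((gaussianReal 0 1).prod ν) := by
    rw [hIGF, ← Measure.map_map hFmeas (hξ.prodMk hη), hpair]
  refine Measure.ext fun A hA => ?_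
  set G : ℝ → ENNReal := fun s =>
    A.indicator 1 (a0 m l s) * ENNReal.ofReal (m / (m + a0 m l s))
      + A.indicator 1 (m ^ 2 / a0 m l s) * ENNReal.ofReal (1 - m / (m + a0 m l s)) with hG
  have hGmeas : Measurable G := by
    apply Measurable.add
    · exact ((measurable_one.indicator hA).comp ha0m).mul
        ((measurable_const.div (measurable_const.add ha0m)).ennreal_ofReal)
    · exact ((measurable_one.indicator hA).comp (measurable_const.div ha0m)).mul
        ((measurable_const.sub (measurable_const.div (measurable_const.add ha0m))).ennreal_ofReal)
  have hνG : ∀ s, ν (Prod.mk s ⁻¹' (F ⁻¹' A)) = G s := by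
    intro s
    have hapos := a0_pos hm hl s
    have hma : (0:ℝ) < m + a0 m l s := by linarith
    have hc0 : 0 ≤ m / (m + a0 m l s) := div_nonneg hm.le hma.le
    have hc1 : m / (m + a0 m l s) ≤ 1 := by
      rw [div_le_one hma]; linarith
    have hpre : Prod.mk s ⁻¹' (F ⁻¹' A)
        = {t | (if t ≤ m / (m + a0 m l s) then a0 m l s else m ^ 2 / a0 m l s) ∈ A} := rfl
    rw [hpre, hν]
    exact unif_apply hc0 hc1 _ _ hA
  rw [hmapIG, Measure.map_apply hFmeas hA, Measure.prod_apply (hFmeas hA),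
    lintegral_congr hνG, gaussianReal_of_var_ne_zero 0 one_ne_zero,
    lintegral_withDensity_eq_lintegral_mul _ (measurable_gaussianPDF 0 1) hGmeas]
  simp only [Pi.mul_apply]
  -- the integrand
  have hHmeas : Measurable (fun s => gaussianPDF 0 1 s * G s) :=
    (measurable_gaussianPDF 0 1).mul hGmeas
  have hHeven : ∀ s, gaussianPDF 0 1 (-s) * G (-s) = gaussianPDF 0 1 s * G s := by
    intro s
    have h1 : gaussianPDF 0 1 (-s) = gaussianPDF 0 1 s := by
      simp [gaussianPDF, gaussianPDFReal, neg_sq]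
    rw [h1, hG]
    simp only [a0_neg]
  have hsplit : ∫⁻ s, gaussianPDF 0 1 s * G s
      = (∫⁻ s in Iio (0:ℝ), gaussianPDF 0 1 s * G s)
        + ∫⁻ s in Ioi (0:ℝ), gaussianPDF 0 1 s * G s := by
    rw [← lintegral_add_compl (fun s => gaussianPDF 0 1 s * G s)
      (measurableSet_Iio (a := (0:ℝ)))]
    congr 1
    rw [compl_Iio, ← Measure.restrict_congr_set Ioi_ae_eq_Ici]
  have hIio : ∫⁻ s in Iio (0:ℝ), gaussianPDF 0 1 s * G s
      = ∫⁻ s in Ioi (0:ℝ), gaussianPDF 0 1 s * G s := by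
    have himg : (fun s : ℝ => -s) '' Ioi 0 = Iio 0 := by
      ext t
      constructor
      · rintro ⟨u, hu, rfl⟩
        simpa using hu
      · intro ht
        exact ⟨-t, by simpa using ht, by ring⟩
    rw [← himg, lintegral_cov measurableSet_Ioi
      (fun x _ => (hasDerivAt_neg x).hasDerivWithinAt) (neg_injective.injOn) _]
    apply setLIntegral_congr_fun measurableSet_Ioi
    intro x _
    dsimp only
    rw [hHeven x]
    norm_num
  have hIoi : ∫⁻ s in Ioi (0:ℝ), gaussianPDF 0 1 s * G s
      = ∫⁻ x in Ioo 0 m,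
          ENNReal.ofReal |psid m l x| * (gaussianPDF 0 1 (psi m l x) * G (psi m l x)) := by
    rw [← psi_image hm hl, lintegral_cov measurableSet_Ioo
      (fun x hx => (psi_hasDeriv hm hl hx).hasDerivWithinAt) (psi_injOn hm hl)]
  set W : ℝ → ENNReal := fun x =>
    ENNReal.ofReal |psid m l x| * (gaussianPDF 0 1 (psi m l x) * G (psi m l x)) with hW
  have hWmeas : Measurable W :=
    ((psid_measurable m l).abs.ennreal_ofReal).mul
      (((measurable_gaussianPDF 0 1).comp (psi_measurable m l)).mul
        (hGmeas.comp (psi_measurable m l)))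
  have hWW : ∀ x ∈ Ioo 0 m, W x + W x
      = ENNReal.ofReal (invGaussianDensity m l x) * A.indicator 1 x
        + ENNReal.ofReal (m ^ 2 / x ^ 2 * invGaussianDensity m l (m ^ 2 / x))
            * A.indicator 1 (m ^ 2 / x) := by
    intro x hx
    have hx0 : 0 < x := hx.1
    have hmx : (0:ℝ) < m + x := by linarith
    have hax : a0 m l (psi m l x) = x := a0_psi hm hl hx
    have hpdf0 : 0 ≤ gaussianPDFReal 0 1 (psi m l x) := gaussianPDFReal_nonneg _ _ _
    have hc0 : 0 ≤ m / (m + x) := div_nonneg hm.le hmx.le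
    have hd0 : 0 ≤ 1 - m / (m + x) := by
      rw [sub_nonneg, div_le_one hmx]; linarith
    have hr1 : 0 ≤ |psid m l x| * gaussianPDFReal 0 1 (psi m l x) * (m / (m + x)) :=
      mul_nonneg (mul_nonneg (abs_nonneg _) hpdf0) hc0
    have hr2 : 0 ≤ |psid m l x| * gaussianPDFReal 0 1 (psi m l x) * (1 - m / (m + x)) :=
      mul_nonneg (mul_nonneg (abs_nonneg _) hpdf0) hd0
    have hWx : W x
        = ENNReal.ofReal (|psid m l x| * gaussianPDFReal 0 1 (psi m l x) * (m / (m + x)))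
            * A.indicator 1 x
          + ENNReal.ofReal
              (|psid m l x| * gaussianPDFReal 0 1 (psi m l x) * (1 - m / (m + x)))
            * A.indicator 1 (m ^ 2 / x) := by
      simp only [hW, hG, hax, gaussianPDF]
      rw [ENNReal.ofReal_mul (mul_nonneg (abs_nonneg _) hpdf0),
        ENNReal.ofReal_mul (mul_nonneg (abs_nonneg _) hpdf0),
        ENNReal.ofReal_mul (abs_nonneg _)]
      ring
    rw [hWx, ← real1 hm hl hx, ← real2 hm hl hx, ← double_ofReal hr1, ← double_ofReal hr2]
    ring
  -- second change of variables: u = m^2/x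
  have himg2 : (fun x : ℝ => m ^ 2 / x) '' Ioo 0 m = Ioi m := by
    ext u
    constructor
    · rintro ⟨x, hx, rfl⟩
      have hx0 : 0 < x := hx.1
      have : m * x < m ^ 2 := by nlinarith [hx.2]
      simpa [Set.mem_Ioi, lt_div_iff₀ hx0] using this
    · intro hu
      have hum : m < u := hu
      have hu0 : 0 < u := lt_trans hm hum
      refine ⟨m ^ 2 / u, ⟨by positivity, ?_⟩, by field_simp⟩
      rw [div_lt_iff₀ hu0]
      nlinarith
  have hderiv2 : ∀ x ∈ Ioo 0 m,
      HasDerivWithinAt (fun x : ℝ => m ^ 2 / x) (-(m ^ 2 / x ^ 2)) (Ioo 0 m) x := by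
    intro x hx
    have h := (hasDerivAt_inv hx.1.ne').const_mul (m ^ 2)
    have : HasDerivAt (fun x : ℝ => m ^ 2 / x) (-(m ^ 2 / x ^ 2)) x := by
      exact h.congr_deriv (by field_simp)
    exact this.hasDerivWithinAt
  have hinj2 : Set.InjOn (fun x : ℝ => m ^ 2 / x) (Ioo 0 m) := by
    intro x hx y hy h
    have hx0 : x ≠ 0 := hx.1.ne'
    have hy0 : y ≠ 0 := hy.1.ne'
    field_simp at h
    exact h.symm
  have hmap2 : ∫⁻ x in Ioo 0 m,
        ENNReal.ofReal (m ^ 2 / x ^ 2 * invGaussianDensity m l (m ^ 2 / x))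
          * A.indicator 1 (m ^ 2 / x)
      = ∫⁻ u in Ioi m, ENNReal.ofReal (invGaussianDensity m l u) * A.indicator 1 u := by
    rw [← himg2, lintegral_cov measurableSet_Ioo hderiv2 hinj2]
    apply setLIntegral_congr_fun measurableSet_Ioo
    intro x hx
    dsimp only
    have hx0 : 0 < x := hx.1
    rw [abs_neg, abs_of_nonneg (by positivity : (0:ℝ) ≤ m ^ 2 / x ^ 2), ← mul_assoc,
      ← ENNReal.ofReal_mul (by positivity : (0:ℝ) ≤ m ^ 2 / x ^ 2)]
  have hdens_meas : Measurable fun x => ENNReal.ofReal (invGaussianDensity m l x)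
        * A.indicator 1 x := by
    apply Measurable.mul
    · apply Measurable.ennreal_ofReal
      unfold invGaussianDensity
      apply Measurable.mul
      · apply Measurable.sqrt
        exact measurable_const.div (measurable_const.mul (measurable_id.pow_const 3))
      · apply Measurable.exp
        exact (measurable_const.mul ((measurable_id.sub_const m).pow_const 2)).div
          (measurable_const.mul measurable_id)
    · exact measurable_one.indicator hA
  have hIoi0 : ∫⁻ x in Ioi (0:ℝ),
        ENNReal.ofReal (invGaussianDensity m l x) * A.indicator 1 x
      = (∫⁻ x in Ioo 0 m, ENNReal.ofReal (invGaussianDensity m l x) * A.indicator 1 x)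
        + ∫⁻ u in Ioi m, ENNReal.ofReal (invGaussianDensity m l u) * A.indicator 1 u := by
    rw [← Ioo_union_Ici_eq_Ioi hm, lintegral_union measurableSet_Ici
      (by rw [Set.disjoint_left]; rintro y ⟨_, h2⟩ h3; exact absurd h3 (not_le.mpr h2))]
    congr 1
    rw [← Measure.restrict_congr_set Ioi_ae_eq_Ici]
  -- put everything together
  rw [hsplit, hIio, hIoi, ← lintegral_add_left hWmeas,
    setLIntegral_congr_fun measurableSet_Ioo hWW,
    lintegral_add_left hdens_meas, hmap2, ← hIoi0]
  -- identify with the inverse Gaussian measure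
  rw [invGaussianMeasure, withDensity_apply _ hA]
  have : ∀ x : ℝ, ENNReal.ofReal (invGaussianDensity m l x) * A.indicator 1 x
      = A.indicator (fun x => ENNReal.ofReal (invGaussianDensity m l x)) x := by
    intro x
    by_cases hx : x ∈ A <;> simp [hx]
  rw [lintegral_congr this, lintegral_indicator hA]
end

section
/- Suppose nonnegative numbers (α̂ᵢⁿ, N̂ᵢⁿ, Λ̂ᵢⁿ) for 0 ≤ i ≤ n−1 satisfy Λ̂ᵢⁿ = α̂ᵢⁿ + k₀ⁿ·N̂ᵢⁿ and α̂ᵢⁿ = gᵢⁿ + Σ_{j=0}^{i−1} k_{i−j}ⁿ N̂ⱼⁿ, where gᵢⁿ = ∫_{tᵢⁿ}^{t_{i+1}ⁿ} g₀(s) ds and kⱼⁿ = ∫_{tⱼⁿ}^{t_{j+1}ⁿ} K(s) ds with tᵢⁿ = iT/n. Define Λⁿ_t = Σ_{i=0}^{⌊nt/T⌋−1} Λ̂ᵢⁿ and Nⁿ_t = Σ_{i=0}^{⌊nt/T⌋−1} N̂ᵢⁿ, and the measure Kⁿ = Σ_{i=0}^{n−1} kᵢⁿ δ_{tᵢⁿ}.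 Then for all t ∈ [0,T]: Λⁿ_t = ∫_0^{⌊nt/T⌋·T/n} g₀(s) ds + ∫_{[0,t]} Nⁿ_{t−s} Kⁿ(ds). -/
open MeasureTheory Set Finset

lemma hawkes_aux_conv (k N : ℕ → ℝ) (m : ℕ) :
    ∑ i ∈ Finset.range m, ∑ j ∈ Finset.range (i + 1), k (i - j) * N j
      = ∑ i ∈ Finset.range m, k i * ∑ j ∈ Finset.range (m - i), N j := by
  induction m with
  | zero => simp
  | succ m ih =>
    have h1 : ∑ j ∈ Finset.range (m + 1), k (m - j) * N j
        = ∑ i ∈ Finset.range (m + 1), k i * N (m - i) := by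
      rw [← Finset.sum_range_reflect]
      refine Finset.sum_congr rfl fun j hj => ?_
      have hjm : j ≤ m := Nat.lt_succ_iff.mp (Finset.mem_range.mp hj)
      rw [Nat.succ_sub_one, Nat.sub_sub_self hjm]
    have h2 : ∑ i ∈ Finset.range (m + 1), k i * ∑ j ∈ Finset.range (m + 1 - i), N j
        = ∑ i ∈ Finset.range m, k i * ∑ j ∈ Finset.range (m - i), N j
          + ∑ i ∈ Finset.range (m + 1), k i * N (m - i) := by
      rw [Finset.sum_range_succ (fun i => k i * ∑ j ∈ Finset.range (m + 1 - i), N j) m,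
        Finset.sum_range_succ (fun i => k i * N (m - i)) m]
      have h3 : ∀ i ∈ Finset.range m,
          k i * ∑ j ∈ Finset.range (m + 1 - i), N j
            = k i * ∑ j ∈ Finset.range (m - i), N j + k i * N (m - i) := by
        intro i hi
        have him : i ≤ m := le_of_lt (Finset.mem_range.mp hi)
        have hmi : m + 1 - i = (m - i) + 1 := by omega
        rw [hmi, Finset.sum_range_succ, mul_add]
      rw [Finset.sum_congr rfl h3, Finset.sum_add_distrib]
      simp [Nat.sub_self]
      ring
    rw [Finset.sum_range_succ (fun i => ∑ j ∈ Finset.range (i + 1), k (i - j) * N j) m,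
      ih, h1, h2]

/-- Volterra reformulation of the Hawkes iVi scheme: if `Λ̂ᵢ = α̂ᵢ + k₀ N̂ᵢ` with
`α̂ᵢ = ∫ g₀` over the `i`-th cell plus `Σ_{j<i} k_{i−j} N̂ⱼ`, then the piecewise-constant
process `Λⁿ_t = Σ_{i<⌊nt/T⌋} Λ̂ᵢ` satisfies
`Λⁿ_t = ∫_0^{⌊nt/T⌋T/n} g₀ + ∫_{[0,t]} Nⁿ_{t−s} Kⁿ(ds)` with `Kⁿ = Σᵢ kᵢ δ_{iT/n}`. -/
theorem hawkes_ivi_volterra_reformulation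
    (T : ℝ) (hT : 0 < T) (n : ℕ) (hn : 1 ≤ n)
    (g₀ K : ℝ → ℝ)
    (hg₀ : IntegrableOn g₀ (Icc 0 T)) (hg₀nn : ∀ s, 0 ≤ g₀ s)
    (hK : IntegrableOn K (Icc 0 T)) (hKnn : ∀ s, 0 ≤ K s)
    (k : ℕ → ℝ) (hk : ∀ j, k j = ∫ s in (j * T / n : ℝ)..((j + 1) * T / n : ℝ), K s)
    (αh Nh Λh : ℕ → ℝ)
    (hnonneg : ∀ i < n, 0 ≤ αh i ∧ 0 ≤ Nh i ∧ 0 ≤ Λh i)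
    (hα : ∀ i < n, αh i = (∫ s in (i * T / n : ℝ)..((i + 1) * T / n : ℝ), g₀ s) +
        ∑ j ∈ Finset.range i, k (i - j) * Nh j)
    (hΛ : ∀ i < n, Λh i = αh i + k 0 * Nh i)
    (Λn Nn : ℝ → ℝ)
    (hΛn : ∀ t, Λn t = ∑ i ∈ Finset.range (Nat.floor (n * t / T)), Λh i)
    (hNn : ∀ t, Nn t = ∑ i ∈ Finset.range (Nat.floor (n * t / T)), Nh i) :
    ∀ t ∈ Icc (0:ℝ) T,
      Λn t = (∫ s in (0:ℝ)..((Nat.floor (n * t / T) : ℝ) * T / n), g₀ s) +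
        ∑ i ∈ Finset.range n,
          (if (i * T / n : ℝ) ≤ t then k i * Nn (t - i * T / n) else 0) := by
  intro t ht
  obtain ⟨ht0, htT⟩ := ht
  have hn0 : (0:ℝ) < n := by positivity
  set m := Nat.floor (n * t / T) with hm
  have hmn : m ≤ n := by
    have h1 : n * t / T ≤ n := by
      rw [div_le_iff₀ hT]
      nlinarith
    calc m ≤ ⌊(n:ℝ)⌋₊ := Nat.floor_mono h1
      _ = n := Nat.floor_natCast n
  have hiff : ∀ i : ℕ, ((i:ℝ) * T / n ≤ t ↔ i ≤ m) := by
    intro i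
    have h0 : (0:ℝ) ≤ n * t / T := by positivity
    rw [hm, Nat.le_floor_iff h0, div_le_iff₀ hn0, le_div_iff₀ hT]
    constructor <;> intro h <;> nlinarith
  -- the value of Nn at shifted times
  have key : ∀ i : ℕ, i ≤ m → Nn (t - i * T / n) = ∑ j ∈ Finset.range (m - i), Nh j := by
    intro i hi
    rw [hNn]
    have h1 : n * (t - i * T / n) / T = n * t / T - i := by
      field_simp
    have hx0 : (0:ℝ) ≤ n * t / T := by positivity
    have hmx : (m:ℝ) ≤ n * t / T := Nat.floor_le hx0
    have hxm : n * t / T < (m:ℝ) + 1 := Nat.lt_floor_add_one _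
    have him : (i:ℝ) ≤ m := by exact_mod_cast hi
    have h2 : ⌊(n * t / T : ℝ) - i⌋₊ = m - i := by
      rw [Nat.floor_eq_iff (by linarith), Nat.cast_sub hi]
      constructor <;> linarith
    rw [h1, h2]
  -- the RHS discrete convolution sum
  have hRHS : (∑ i ∈ Finset.range n,
      (if (i * T / n : ℝ) ≤ t then k i * Nn (t - i * T / n) else 0))
      = ∑ i ∈ Finset.range m, k i * ∑ j ∈ Finset.range (m - i), Nh j := by
    have hzero : ∀ i ∈ Finset.range n, i ∉ Finset.range m →
        (if ((i:ℝ) * T / n : ℝ) ≤ t then k i * Nn (t - i * T / n) else 0) = 0 := by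
      intro i hi hni
      have him : m ≤ i := le_of_not_gt fun h => hni (Finset.mem_range.mpr h)
      by_cases h : ((i:ℝ) * T / n : ℝ) ≤ t
      · have hieq : i = m := le_antisymm ((hiff i).mp h) him
        subst hieq
        rw [if_pos h, key _ le_rfl]
        simp
      · rw [if_neg h]
    rw [← Finset.sum_subset (Finset.range_subset_range.mpr hmn) hzero]
    refine Finset.sum_congr rfl fun i hi => ?_
    have him : i ≤ m := le_of_lt (Finset.mem_range.mp hi)
    rw [if_pos ((hiff i).mpr him), key i him]
  -- the integral split into cells
  have hint : (∫ s in (0:ℝ)..((m:ℝ) * T / n), g₀ s)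
      = ∑ i ∈ Finset.range m, ∫ s in ((i:ℝ) * T / n)..(((i:ℝ) + 1) * T / n), g₀ s := by
    have hadj := intervalIntegral.sum_integral_adjacent_intervals
      (a := fun i : ℕ => (i:ℝ) * T / n) (μ := volume) (f := g₀) (n := m) ?_
    · push_cast at hadj
      rw [zero_mul, zero_div] at hadj
      exact hadj.symm
    · intro i hi
      have hi1 : ((i:ℝ) + 1) ≤ n := by
        have : i + 1 ≤ n := Nat.succ_le_of_lt (lt_of_lt_of_le hi hmn)
        exact_mod_cast this
      have hiT : ((i:ℝ) + 1) * T / n ≤ T := by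
        rw [div_le_iff₀ hn0]
        nlinarith
      have h0 : (0:ℝ) ≤ (i:ℝ) * T / n := by positivity
      have hab : (i:ℝ) * T / n ≤ ((i:ℝ) + 1) * T / n := by
        rw [div_le_div_iff₀ hn0 hn0]
        nlinarith
      refine (hg₀.mono_set ?_).intervalIntegrable
      show Set.uIcc ((i:ℝ) * T / n) (((i + 1 : ℕ):ℝ) * T / n) ⊆ Set.Icc 0 T
      push_cast
      rw [Set.uIcc_of_le hab]
      intro x hx
      exact ⟨le_trans h0 hx.1, le_trans hx.2 hiT⟩
  rw [hΛn, hRHS, hint, ← hawkes_aux_conv, ← Finset.sum_add_distrib]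
  refine Finset.sum_congr rfl fun i hi => ?_
  have hin : i < n := lt_of_lt_of_le (Finset.mem_range.mp hi) hmn
  rw [hΛ i hin, hα i hin, Finset.sum_range_succ, Nat.sub_self]
  ring
end

section
/- Let α > 0 and k ∈ (0,1), let ξ ~ IG(α/(1−k), (α/k)²) and, conditional on ξ, let N̂ ~ Poisson(ξ). Set Λ̂ = α + k·N̂. Then E[N̂] = E[Λ̂] = α/(1−k) and E[(N̂ − Λ̂)²] = (k² + (1−k)²)·E[Λ̂]. -/
open MeasureTheory Set

namespace HawkesIVI
open Filter Topology


noncomputable def ker (a b x : ℝ) : ℝ := Real.exp (-a * x - b / x)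

lemma ker_le_one {a b : ℝ} (ha : 0 ≤ a) (hb : 0 ≤ b) {x : ℝ} (hx : 0 ≤ x) :
    ker a b x ≤ 1 := by
  rw [ker, Real.exp_le_one_iff]
  have h1 : 0 ≤ b / x := div_nonneg hb hx
  nlinarith [mul_nonneg ha hx]

lemma sq_mul_exp_le {b y : ℝ} (hb : 0 < b) (hy : 0 < y) :
    y ^ 2 * Real.exp (-(b * y)) ≤ 4 / b ^ 2 := by
  have h1 : b * y / 2 ≤ Real.exp (b * y / 2) :=
    le_trans (by linarith [Real.add_one_le_exp (b * y / 2)]) (le_refl _)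
  have h2 : (b * y / 2) ^ 2 ≤ Real.exp (b * y) := by
    have := pow_le_pow_left₀ (by positivity) h1 2
    calc (b * y / 2) ^ 2 ≤ Real.exp (b * y / 2) ^ 2 := this
    _ = Real.exp (b * y) := by rw [← Real.exp_nat_mul]; ring_nf
  have h3 : (0:ℝ) < (b * y / 2) ^ 2 := by positivity
  rw [Real.exp_neg]
  rw [← div_eq_mul_inv, div_le_div_iff₀ (Real.exp_pos _) (by positivity)]
  calc y ^ 2 * b ^ 2 = (b * y / 2) ^ 2 * 4 := by ring
  _ ≤ Real.exp (b * y) * 4 := by nlinarith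
  _ = 4 * Real.exp (b * y) := by ring

lemma continuousOn_rpow_ker (a b p : ℝ) :
    ContinuousOn (fun x : ℝ => x ^ p * ker a b x) (Ioi 0) := by
  apply ContinuousOn.mul
  · exact ContinuousOn.rpow_const continuousOn_id (fun x hx => Or.inl (ne_of_gt hx))
  · apply Real.continuous_exp.comp_continuousOn
    have h1 : ContinuousOn (fun x : ℝ => -a * x) (Ioi 0) :=
      (continuous_const.mul continuous_id).continuousOn
    have h2 : ContinuousOn (fun x : ℝ => b / x) (Ioi 0) :=
      continuousOn_const.div continuousOn_id (fun x hx => ne_of_gt hx)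
    exact h1.sub h2

lemma abs_rpow_ker_le_small {a b p : ℝ} (ha : 0 < a) (hb : 0 < b) (hp1 : -2 ≤ p)
    {x : ℝ} (hx0 : 0 < x) (hx1 : x ≤ 1) :
    ‖x ^ p * ker a b x‖ ≤ 4 / b ^ 2 := by
  have hker : 0 < ker a b x := Real.exp_pos _
  rw [Real.norm_eq_abs, abs_of_pos (by positivity)]
  have h1 : x ^ p ≤ x ^ (-2 : ℝ) := Real.rpow_le_rpow_of_exponent_ge hx0 hx1 hp1
  have h2 : ker a b x ≤ Real.exp (-(b * (1/x))) := by
    rw [ker, Real.exp_le_exp]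
    have : 0 ≤ a * x := by positivity
    have hinv : b / x = b * (1/x) := by ring
    rw [hinv]
    nlinarith
  calc x ^ p * ker a b x ≤ x ^ (-2:ℝ) * Real.exp (-(b * (1/x))) := by
        apply mul_le_mul h1 h2 (le_of_lt hker) (by positivity)
  _ = (1/x) ^ 2 * Real.exp (-(b * (1/x))) := by
        rw [Real.rpow_neg hx0.le]
        rw [show ((2:ℝ) : ℝ) = ((2:ℕ):ℝ) by norm_num, Real.rpow_natCast]
        rw [one_div, inv_pow]
  _ ≤ 4 / b ^ 2 := sq_mul_exp_le hb (by positivity)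

lemma abs_rpow_ker_le_large {a b p : ℝ} (ha : 0 < a) (hb : 0 < b) (hp2 : p ≤ 1/2)
    {x : ℝ} (hx1 : 1 ≤ x) :
    ‖x ^ p * ker a b x‖ ≤ (2/a) * Real.exp (-(a/2) * x) := by
  have hx0 : (0:ℝ) < x := lt_of_lt_of_le one_pos hx1
  have hker : 0 < ker a b x := Real.exp_pos _
  rw [Real.norm_eq_abs, abs_of_pos (by positivity)]
  have h1 : x ^ p ≤ x := by
    calc x ^ p ≤ x ^ (1:ℝ) := Real.rpow_le_rpow_of_exponent_le hx1 (by linarith)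
    _ = x := Real.rpow_one x
  have h2 : x ≤ (2/a) * Real.exp (a/2 * x) := by
    have h : a/2*x ≤ Real.exp (a/2*x) := by linarith [Real.add_one_le_exp (a/2*x)]
    calc x = (2/a) * (a/2*x) := by field_simp
    _ ≤ (2/a) * Real.exp (a/2*x) := mul_le_mul_of_nonneg_left h (by positivity)
  have h3 : ker a b x ≤ Real.exp (-(a*x)) := by
    rw [ker, Real.exp_le_exp]
    have : 0 ≤ b / x := by positivity
    linarith
  calc x ^ p * ker a b x ≤ ((2/a) * Real.exp (a/2*x)) * Real.exp (-(a*x)) := by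
        apply mul_le_mul (le_trans h1 h2) h3 hker.le (by positivity)
  _ = (2/a) * Real.exp (-(a/2) * x) := by
        rw [mul_assoc, ← Real.exp_add]; ring_nf

lemma integrableOn_rpow_ker {a b : ℝ} (p : ℝ) (ha : 0 < a) (hb : 0 < b)
    (hp1 : -2 ≤ p) (hp2 : p ≤ 1/2) :
    IntegrableOn (fun x : ℝ => x ^ p * ker a b x) (Ioi 0) := by
  rw [← Ioc_union_Ioi_eq_Ioi (zero_le_one (α := ℝ))]
  apply IntegrableOn.union
  · refine ⟨((continuousOn_rpow_ker a b p).mono Ioc_subset_Ioi_self).aestronglyMeasurable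
      measurableSet_Ioc, ?_⟩
    apply HasFiniteIntegral.restrict_of_bounded (C := 4 / b ^ 2)
      (measure_Ioc_lt_top)
    filter_upwards [ae_restrict_mem measurableSet_Ioc] with x hx
    exact abs_rpow_ker_le_small ha hb hp1 hx.1 hx.2
  · apply Integrable.mono ((exp_neg_integrableOn_Ioi 1 (half_pos ha)).const_mul (2/a))
    · exact ((continuousOn_rpow_ker a b p).mono (Ioi_subset_Ioi zero_le_one)).aestronglyMeasurable
        measurableSet_Ioi
    · filter_upwards [ae_restrict_mem measurableSet_Ioi] with x hx
      calc ‖x ^ p * ker a b x‖ ≤ (2/a) * Real.exp (-(a/2) * x) :=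
            abs_rpow_ker_le_large ha hb hp2 hx.le
      _ ≤ ‖(2/a) * Real.exp (-(a/2) * x)‖ := le_abs_self _

noncomputable def Mint (a b p : ℝ) : ℝ := ∫ x in Ioi (0:ℝ), x ^ p * ker a b x

variable {a b : ℝ}

lemma Mint_symm (ha : 0 < a) (hb : 0 < b) :
    Mint a b (-(1/2)) = Real.sqrt (b/a) * Mint a b (-(3/2)) := by
  set c := b / a with hc_def
  have hc : 0 < c := div_pos hb ha
  have himg : (fun y : ℝ => c / y) '' (Ioi 0) = Ioi 0 := by
    ext y
    constructor
    · rintro ⟨x, hx, rfl⟩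
      exact div_pos hc hx
    · intro hy
      exact ⟨c / y, div_pos hc hy, by field_simp⟩
  have hderiv : ∀ y ∈ Ioi (0:ℝ), HasDerivWithinAt (fun y : ℝ => c / y) (-(c / y^2)) (Ioi 0) y := by
    intro y hy
    have hy' : (0:ℝ) < y := hy
    have h := (hasDerivAt_inv (ne_of_gt hy')).const_mul c
    have hfe : (fun y : ℝ => c * y⁻¹) = fun y : ℝ => c / y := by
      funext z; rw [div_eq_mul_inv]
    rw [hfe] at h
    have h2 : HasDerivAt (fun y : ℝ => c / y) (-(c / y^2)) y := by
      refine h.congr_deriv ?_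
      ring
    exact h2.hasDerivWithinAt
  have hinj : InjOn (fun y : ℝ => c / y) (Ioi 0) := by
    intro y1 h1 y2 h2 he
    have h1' : (0:ℝ) < y1 := h1
    have h2' : (0:ℝ) < y2 := h2
    simp only at he
    rw [div_eq_div_iff (ne_of_gt h1') (ne_of_gt h2')] at he
    exact (mul_left_cancel₀ hc.ne' he).symm
  have := integral_image_eq_integral_abs_deriv_smul measurableSet_Ioi hderiv hinj
    (fun x => x ^ (-(1/2):ℝ) * ker a b x)
  rw [himg] at this
  rw [Mint, this]
  rw [show Real.sqrt (b/a) * Mint a b (-(3/2)) =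
    ∫ y in Ioi (0:ℝ), Real.sqrt c * (y ^ (-(3/2):ℝ) * ker a b y) from by
      rw [Mint, ← integral_const_mul]]
  apply setIntegral_congr_fun measurableSet_Ioi
  intro y hy
  have hy' : (0:ℝ) < y := hy
  have hcy : (0:ℝ) < c / y := div_pos hc hy'
  have hker : ker a b (c / y) = ker a b y := by
    rw [ker, ker]
    congr 1
    rw [hc_def]
    field_simp [ha.ne', hb.ne', hy'.ne']
    ring
  have e1 : (c/y) ^ (-(1/2):ℝ) = c ^ (-(1/2):ℝ) * y ^ ((1/2):ℝ) := by
    rw [div_eq_mul_inv, Real.mul_rpow hc.le (by positivity), ← Real.rpow_neg_one y,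
      ← Real.rpow_mul hy'.le]
    norm_num
  simp only [smul_eq_mul]
  rw [abs_of_neg (neg_lt_zero.mpr (by positivity : (0:ℝ) < c / y^2)), neg_neg, hker, e1]
  have e2 : c / y ^ 2 * (c ^ (-(1/2):ℝ) * y ^ ((1/2):ℝ)) = Real.sqrt c * y ^ (-(3/2):ℝ) := by
    rw [Real.sqrt_eq_rpow]
    rw [show (c:ℝ) / y^2 = c ^ (1:ℝ) * (y ^ ((2:ℕ):ℝ))⁻¹ by
      rw [Real.rpow_one, Real.rpow_natCast]; ring]
    rw [← Real.rpow_neg hy'.le]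
    rw [mul_mul_mul_comm, ← Real.rpow_add hc, ← Real.rpow_add hy']
    norm_num
  rw [← mul_assoc, e2, mul_assoc]

lemma ibp (ha : 0 < a) (hb : 0 < b) :
    (1/2) * Mint a b (-(1/2)) - a * Mint a b (1/2) + b * Mint a b (-(3/2)) = 0 := by
  set g : ℝ → ℝ := fun x => x ^ ((1:ℝ)/2) * ker a b x with hg_def
  set g' : ℝ → ℝ := fun x =>
    (1/2) * (x ^ (-(1/2):ℝ) * ker a b x) - a * (x ^ ((1/2):ℝ) * ker a b x)
      + b * (x ^ (-(3/2):ℝ) * ker a b x) with hg'_def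
  have hg0 : g 0 = 0 := by
    simp [hg_def, Real.zero_rpow (by norm_num : ((1:ℝ)/2) ≠ 0)]
  have hgnn : ∀ x : ℝ, 0 ≤ x → 0 ≤ g x := by
    intro x hx
    exact mul_nonneg (Real.rpow_nonneg hx _) (Real.exp_pos _).le
  have hgle : ∀ x : ℝ, 0 ≤ x → g x ≤ x ^ ((1:ℝ)/2) := by
    intro x hx
    have h1 : ker a b x ≤ 1 := by
      rw [ker, Real.exp_le_one_iff]
      have : 0 ≤ b / x := div_nonneg hb.le hx
      nlinarith [mul_nonneg ha.le hx]
    calc g x ≤ x ^ ((1:ℝ)/2) * 1 :=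
      mul_le_mul_of_nonneg_left h1 (Real.rpow_nonneg hx _)
    _ = x ^ ((1:ℝ)/2) := mul_one _
  have hcont : ContinuousWithinAt g (Ici 0) 0 := by
    rw [ContinuousWithinAt, hg0]
    apply squeeze_zero'
    · filter_upwards [eventually_mem_nhdsWithin] with x hx
      exact hgnn x hx
    · filter_upwards [eventually_mem_nhdsWithin] with x hx
      exact hgle x hx
    · have h := (Real.continuousAt_rpow_const 0 ((1:ℝ)/2) (Or.inr (by norm_num))).continuousWithinAt
        (s := Ici (0:ℝ))
      rw [ContinuousWithinAt] at h
      rwa [Real.zero_rpow (by norm_num : ((1:ℝ)/2) ≠ 0)] at h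
  have hderiv : ∀ x ∈ Ioi (0:ℝ), HasDerivAt g (g' x) x := by
    intro x hx
    have hx' : (0:ℝ) < x := hx
    have h1 : HasDerivAt (fun x : ℝ => x ^ ((1:ℝ)/2)) ((1/2) * x ^ ((1:ℝ)/2 - 1)) x :=
      Real.hasDerivAt_rpow_const (Or.inl hx'.ne')
    have h2a : HasDerivAt (fun x : ℝ => -a * x) (-a) x := by
      simpa using (hasDerivAt_id x).const_mul (-a)
    have h2b : HasDerivAt (fun x : ℝ => b / x) (-(b / x^2)) x := by
      have h := (hasDerivAt_inv hx'.ne').const_mul b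
      have hfe : (fun y : ℝ => b * y⁻¹) = fun y : ℝ => b / y := by
        funext z; rw [div_eq_mul_inv]
      rw [hfe] at h
      refine h.congr_deriv ?_
      ring
    have h2 : HasDerivAt (fun x : ℝ => -a * x - b / x) (-a - (-(b / x^2))) x := h2a.sub h2b
    have h3 : HasDerivAt (fun x : ℝ => ker a b x)
        (Real.exp (-a * x - b / x) * (-a - (-(b / x^2)))) x := h2.exp
    have h4 := h1.mul h3
    refine h4.congr_deriv ?_
    symm
    rw [hg'_def]
    simp only [ker]
    have e1 : x ^ (-(1/2):ℝ) = x ^ ((1:ℝ)/2 - 1) := by norm_num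
    have e2 : x ^ (-(3/2):ℝ) = x ^ ((1:ℝ)/2) / x ^ 2 := by
      rw [show (x:ℝ) ^ (2:ℕ) = x ^ ((2:ℕ):ℝ) from (Real.rpow_natCast x 2).symm,
        ← Real.rpow_sub hx']
      norm_num
    rw [e1, e2]
    field_simp
    ring
  have h'int : IntegrableOn g' (Ioi (0:ℝ)) := by
    have i1 := (integrableOn_rpow_ker (-(1/2)) ha hb (by norm_num) (by norm_num)).const_mul (1/2)
    have i2 := (integrableOn_rpow_ker ((1:ℝ)/2) ha hb (by norm_num) (by norm_num)).const_mul a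
    have i3 := (integrableOn_rpow_ker (-(3/2)) ha hb (by norm_num) (by norm_num)).const_mul b
    exact (i1.sub i2).add i3
  have htop : Tendsto g atTop (𝓝 0) := by
    apply squeeze_zero' (g := fun x => (2/a) * Real.exp (-(a/2) * x))
    · filter_upwards [eventually_ge_atTop (0:ℝ)] with x hx
      exact hgnn x hx
    · filter_upwards [eventually_ge_atTop (1:ℝ)] with x hx
      have h := abs_rpow_ker_le_large ha hb (p := (1:ℝ)/2) (le_refl _) hx
      calc g x ≤ ‖x ^ ((1:ℝ)/2) * ker a b x‖ := le_abs_self _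
      _ ≤ (2/a) * Real.exp (-(a/2) * x) := h
    · have h1 : Tendsto (fun x : ℝ => (a/2) * x) atTop atTop :=
        Tendsto.const_mul_atTop (half_pos ha) tendsto_id
      have h2 := (Real.tendsto_exp_neg_atTop_nhds_zero.comp h1).const_mul ((2:ℝ)/a)
      rw [mul_zero] at h2
      refine h2.congr fun x => ?_
      simp only [Function.comp_apply]
      ring_nf
  have hFTC := integral_Ioi_of_hasDerivAt_of_tendsto hcont hderiv h'int htop
  rw [hg0, sub_zero] at hFTC
  have hsplit : ∫ x in Ioi (0:ℝ), g' x =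
      (1/2) * Mint a b (-(1/2)) - a * Mint a b (1/2) + b * Mint a b (-(3/2)) := by
    rw [hg'_def]
    have i1 : IntegrableOn (fun x : ℝ => (1:ℝ)/2 * (x ^ (-(1/2):ℝ) * ker a b x)) (Ioi 0) := by
      exact (integrableOn_rpow_ker (-(1/2)) ha hb (by norm_num) (by norm_num)).const_mul (1/2)
    have i2 : IntegrableOn (fun x : ℝ => a * (x ^ ((1/2):ℝ) * ker a b x)) (Ioi 0) := by
      exact (integrableOn_rpow_ker ((1:ℝ)/2) ha hb (by norm_num) (by norm_num)).const_mul a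
    have i3 : IntegrableOn (fun x : ℝ => b * (x ^ (-(3/2):ℝ) * ker a b x)) (Ioi 0) := by
      exact (integrableOn_rpow_ker (-(3/2)) ha hb (by norm_num) (by norm_num)).const_mul b
    have i12 : IntegrableOn (fun x : ℝ => (1:ℝ)/2 * (x ^ (-(1/2):ℝ) * ker a b x)
        - a * (x ^ ((1/2):ℝ) * ker a b x)) (Ioi 0) := i1.sub i2
    rw [MeasureTheory.integral_add i12 i3, MeasureTheory.integral_sub i1 i2,
      integral_const_mul, integral_const_mul, integral_const_mul]
    rfl
  rw [← hsplit, hFTC]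
variable {m l : ℝ}

lemma dens_nonneg (m l x : ℝ) : 0 ≤ invGaussianDensity m l x :=
  mul_nonneg (Real.sqrt_nonneg _) (Real.exp_pos _).le

lemma measurable_dens (m l : ℝ) : Measurable (invGaussianDensity m l) := by
  apply Measurable.mul
  · exact (measurable_const.div ((measurable_const.mul (measurable_id.pow_const 3)))).sqrt
  · exact (((measurable_const.mul ((measurable_id.sub_const m).pow_const 2)).div
      (measurable_const.mul measurable_id))).exp

lemma dens_eq (hm : 0 < m) (hl : 0 < l) {x : ℝ} (hx : 0 < x) :
    invGaussianDensity m l x =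
      (Real.sqrt (l/(2*Real.pi)) * Real.exp (l/m)) *
        (x ^ (-(3/2):ℝ) * ker (l/(2*m^2)) (l/2) x) := by
  have hπ : (0:ℝ) < Real.pi := Real.pi_pos
  have e1 : Real.sqrt (l / (2 * Real.pi * x ^ 3)) =
      Real.sqrt (l/(2*Real.pi)) * x ^ (-(3/2):ℝ) := by
    rw [show l / (2 * Real.pi * x ^ 3) = (l/(2*Real.pi)) * (x^3)⁻¹ by field_simp]
    rw [Real.sqrt_mul (by positivity) _]
    congr 1
    rw [Real.sqrt_eq_rpow, ← Real.rpow_natCast x 3, ← Real.rpow_neg hx.le,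
      ← Real.rpow_mul hx.le]
    try norm_num
  have e2 : -l * (x - m) ^ 2 / (2 * m ^ 2 * x) =
      l/m + (-(l/(2*m^2)) * x - (l/2) / x) := by
    field_simp
    ring
  rw [invGaussianDensity, e1, e2, Real.exp_add, ker]
  ring

lemma igMoments (hm : 0 < m) (hl : 0 < l)
    (hprob : (invGaussianMeasure m l) univ = 1) :
    (∫⁻ x in Ioi (0:ℝ), ENNReal.ofReal (invGaussianDensity m l x * x)) = ENNReal.ofReal m ∧
    (∫⁻ x in Ioi (0:ℝ), ENNReal.ofReal (invGaussianDensity m l x * x^2))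
      = ENNReal.ofReal (m^3/l + m^2) := by
  set a : ℝ := l/(2*m^2) with ha_def
  set b : ℝ := l/2 with hb_def
  set C : ℝ := Real.sqrt (l/(2*Real.pi)) * Real.exp (l/m) with hC_def
  have ha : 0 < a := by positivity
  have hb : 0 < b := by positivity
  have hC : 0 < C := by
    have : (0:ℝ) < l/(2*Real.pi) := by positivity
    positivity
  -- Integrals of dens * x^j expressed via Mint
  have eq0 : EqOn (fun x : ℝ => invGaussianDensity m l x)
      (fun x : ℝ => C * (x ^ (-(3/2):ℝ) * ker a b x)) (Ioi 0) := fun x hx =>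
    dens_eq hm hl hx
  have eq1 : EqOn (fun x : ℝ => invGaussianDensity m l x * x)
      (fun x : ℝ => C * (x ^ (-(1/2):ℝ) * ker a b x)) (Ioi 0) := by
    intro x hx
    have hx' : (0:ℝ) < x := hx
    simp only
    rw [dens_eq hm hl hx']
    have hxp : x ^ (-(3/2):ℝ) * x = x ^ (-(1/2):ℝ) := by
      have h := Real.rpow_add hx' (-(3/2)) 1
      rw [Real.rpow_one] at h
      rw [← h]
      norm_num
    rw [← hxp]
    ring
  have eq2 : EqOn (fun x : ℝ => invGaussianDensity m l x * x^2)
      (fun x : ℝ => C * (x ^ ((1/2):ℝ) * ker a b x)) (Ioi 0) := by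
    intro x hx
    have hx' : (0:ℝ) < x := hx
    simp only
    rw [dens_eq hm hl hx']
    have hxp : x ^ (-(3/2):ℝ) * x^2 = x ^ ((1/2):ℝ) := by
      rw [← Real.rpow_natCast x 2, ← Real.rpow_add hx']
      norm_num
    rw [← hxp]
    ring
  have int0 : IntegrableOn (fun x : ℝ => invGaussianDensity m l x) (Ioi 0) := by
    have h : IntegrableOn (fun x : ℝ => C * (x ^ (-(3/2):ℝ) * ker a b x)) (Ioi 0) :=
      (integrableOn_rpow_ker (-(3/2)) ha hb (by norm_num) (by norm_num)).const_mul C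
    exact h.congr_fun (fun x hx => (eq0 hx).symm) measurableSet_Ioi
  have int1 : IntegrableOn (fun x : ℝ => invGaussianDensity m l x * x) (Ioi 0) := by
    have h : IntegrableOn (fun x : ℝ => C * (x ^ (-(1/2):ℝ) * ker a b x)) (Ioi 0) :=
      (integrableOn_rpow_ker (-(1/2)) ha hb (by norm_num) (by norm_num)).const_mul C
    exact h.congr_fun (fun x hx => (eq1 hx).symm) measurableSet_Ioi
  have int2 : IntegrableOn (fun x : ℝ => invGaussianDensity m l x * x^2) (Ioi 0) := by
    have h : IntegrableOn (fun x : ℝ => C * (x ^ ((1/2):ℝ) * ker a b x)) (Ioi 0) :=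
      (integrableOn_rpow_ker ((1:ℝ)/2) ha hb (by norm_num) (by norm_num)).const_mul C
    exact h.congr_fun (fun x hx => (eq2 hx).symm) measurableSet_Ioi
  have val0 : (∫ x in Ioi (0:ℝ), invGaussianDensity m l x) = C * Mint a b (-(3/2)) := by
    rw [setIntegral_congr_fun measurableSet_Ioi eq0, integral_const_mul]; rfl
  have val1 : (∫ x in Ioi (0:ℝ), invGaussianDensity m l x * x) = C * Mint a b (-(1/2)) := by
    rw [setIntegral_congr_fun measurableSet_Ioi eq1, integral_const_mul]; rfl
  have val2 : (∫ x in Ioi (0:ℝ), invGaussianDensity m l x * x^2) = C * Mint a b ((1:ℝ)/2) := by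
    rw [setIntegral_congr_fun measurableSet_Ioi eq2, integral_const_mul]; rfl
  -- total mass 1
  have htotal : C * Mint a b (-(3/2)) = 1 := by
    have h1 : (invGaussianMeasure m l) univ
        = ∫⁻ x in Ioi (0:ℝ), ENNReal.ofReal (invGaussianDensity m l x) := by
      rw [invGaussianMeasure, withDensity_apply _ MeasurableSet.univ, Measure.restrict_univ]
    have h2 : ENNReal.ofReal (∫ x in Ioi (0:ℝ), invGaussianDensity m l x)
        = ∫⁻ x in Ioi (0:ℝ), ENNReal.ofReal (invGaussianDensity m l x) :=
      ofReal_integral_eq_lintegral_ofReal int0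
        (Filter.Eventually.of_forall (fun x => dens_nonneg m l x))
    rw [← val0]
    have h3 : ENNReal.ofReal (∫ x in Ioi (0:ℝ), invGaussianDensity m l x) = 1 := by
      rw [h2, ← h1, hprob]
    have h4 := congrArg ENNReal.toReal h3
    rwa [ENNReal.toReal_ofReal (setIntegral_nonneg measurableSet_Ioi
      (fun x _ => dens_nonneg m l x)), ENNReal.toReal_one] at h4
  have hba : b / a = m^2 := by
    rw [ha_def, hb_def]; field_simp
  have hmom1 : C * Mint a b (-(1/2)) = m := by
    rw [Mint_symm ha hb, hba, ← mul_assoc, mul_comm C, mul_assoc, htotal, mul_one,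
      Real.sqrt_sq hm.le]
  have hmom2 : C * Mint a b ((1:ℝ)/2) = m^3/l + m^2 := by
    have h := ibp (a := a) (b := b) ha hb
    have h2 : a * (C * Mint a b ((1:ℝ)/2)) = (1/2) * (C * Mint a b (-(1/2)))
        + b * (C * Mint a b (-(3/2))) := by
      have := congrArg (fun t => C * t) h
      simp only [mul_zero, mul_add, mul_sub] at this ⊢
      ring_nf at this ⊢
      linarith
    rw [hmom1, htotal, mul_one] at h2
    have h3 : C * Mint a b ((1:ℝ)/2) = ((1/2) * m + b) / a := by
      field_simp at h2 ⊢
      linarith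
    rw [h3, ha_def, hb_def]
    field_simp
  constructor
  · rw [← ofReal_integral_eq_lintegral_ofReal int1 ?_, val1, hmom1]
    filter_upwards [ae_restrict_mem measurableSet_Ioi] with x hx
    exact mul_nonneg (dens_nonneg m l x) (le_of_lt hx)
  · rw [← ofReal_integral_eq_lintegral_ofReal int2 ?_, val2, hmom2]
    filter_upwards [ae_restrict_mem measurableSet_Ioi] with x hx
    exact mul_nonneg (dens_nonneg m l x) (by positivity)


lemma exp_tsum (y : ℝ) : ∑' n : ℕ, y ^ n / (Nat.factorial n : ℝ) = Real.exp y := by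
  rw [Real.exp_eq_exp_ℝ, NormedSpace.exp_eq_tsum_div]

lemma summable_id_mul (x : ℝ) :
    Summable (fun m : ℕ => (m:ℝ) * (x ^ m / (Nat.factorial m : ℝ))) := by
  have hterm : ∀ n : ℕ, ((n+1:ℕ):ℝ) * (x ^ (n+1) / (Nat.factorial (n+1) : ℝ))
      = x * (x ^ n / (Nat.factorial n : ℝ)) := by
    intro n
    rw [Nat.factorial_succ]
    push_cast
    have h1 : (Nat.factorial n : ℝ) ≠ 0 := Nat.cast_ne_zero.mpr (Nat.factorial_ne_zero n)
    field_simp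
    ring
  have hg1 : Summable (fun n : ℕ => ((n+1:ℕ):ℝ) * (x ^ (n+1) / (Nat.factorial (n+1) : ℝ))) :=
    ((Real.summable_pow_div_factorial x).mul_left x).congr (fun n => (hterm n).symm)
  exact (summable_nat_add_iff 1).mp (hg1.congr (fun n => by push_cast; ring_nf))

lemma tsum_id_mul (x : ℝ) :
    ∑' m : ℕ, (m:ℝ) * (x ^ m / (Nat.factorial m : ℝ)) = x * Real.exp x := by
  rw [Summable.tsum_eq_zero_add (summable_id_mul x)]
  simp only [Nat.cast_zero, zero_mul, zero_add]
  have hterm : ∀ n : ℕ, ((n+1:ℕ):ℝ) * (x ^ (n+1) / (Nat.factorial (n+1) : ℝ))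
      = x * (x ^ n / (Nat.factorial n : ℝ)) := by
    intro n
    rw [Nat.factorial_succ]
    push_cast
    have h1 : (Nat.factorial n : ℝ) ≠ 0 := Nat.cast_ne_zero.mpr (Nat.factorial_ne_zero n)
    field_simp
    ring
  calc ∑' n : ℕ, ((n+1:ℕ):ℝ) * (x ^ (n+1) / (Nat.factorial (n+1) : ℝ))
      = ∑' n : ℕ, x * (x ^ n / (Nat.factorial n : ℝ)) := tsum_congr fun n => hterm n
  _ = x * Real.exp x := by rw [tsum_mul_left, exp_tsum]

lemma summable_sq_mul (x : ℝ) :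
    Summable (fun m : ℕ => (m:ℝ)^2 * (x ^ m / (Nat.factorial m : ℝ))) := by
  have hterm : ∀ n : ℕ, ((n+1:ℕ):ℝ)^2 * (x ^ (n+1) / (Nat.factorial (n+1) : ℝ))
      = x * ((n:ℝ) * (x ^ n / (Nat.factorial n : ℝ))) + x * (x ^ n / (Nat.factorial n : ℝ)) := by
    intro n
    rw [Nat.factorial_succ]
    push_cast
    have h1 : (Nat.factorial n : ℝ) ≠ 0 := Nat.cast_ne_zero.mpr (Nat.factorial_ne_zero n)
    field_simp
    ring
  have hg1 : Summable (fun n : ℕ => ((n+1:ℕ):ℝ)^2 * (x ^ (n+1) / (Nat.factorial (n+1) : ℝ))) :=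
    (((summable_id_mul x).mul_left x).add
      ((Real.summable_pow_div_factorial x).mul_left x)).congr (fun n => (hterm n).symm)
  exact (summable_nat_add_iff 1).mp (hg1.congr (fun n => by push_cast; ring_nf))

lemma tsum_sq_mul (x : ℝ) :
    ∑' m : ℕ, (m:ℝ)^2 * (x ^ m / (Nat.factorial m : ℝ)) = (x^2 + x) * Real.exp x := by
  rw [Summable.tsum_eq_zero_add (summable_sq_mul x)]
  norm_num
  have hterm : ∀ n : ℕ, ((n+1:ℕ):ℝ)^2 * (x ^ (n+1) / (Nat.factorial (n+1) : ℝ))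
      = x * ((n:ℝ) * (x ^ n / (Nat.factorial n : ℝ))) + x * (x ^ n / (Nat.factorial n : ℝ)) := by
    intro n
    rw [Nat.factorial_succ]
    push_cast
    have h1 : (Nat.factorial n : ℝ) ≠ 0 := Nat.cast_ne_zero.mpr (Nat.factorial_ne_zero n)
    field_simp
    ring
  calc ∑' n : ℕ, ((n:ℝ)+1)^2 * (x ^ (n+1) / (Nat.factorial (n+1) : ℝ))
      = ∑' n : ℕ, (x * ((n:ℝ) * (x ^ n / (Nat.factorial n : ℝ)))
          + x * (x ^ n / (Nat.factorial n : ℝ))) := by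
        refine tsum_congr fun n => ?_
        rw [← hterm n]; push_cast; ring
  _ = (x^2 + x) * Real.exp x := by
        rw [Summable.tsum_add ((summable_id_mul x).mul_left x)
          ((Real.summable_pow_div_factorial x).mul_left x),
          tsum_mul_left, tsum_mul_left, tsum_id_mul, exp_tsum]
        ring

lemma tsum_ofReal_pois1 {x : ℝ} (hx : 0 ≤ x) :
    ∑' m : ℕ, (m : ENNReal) * ENNReal.ofReal (Real.exp (-x) * x ^ m / (Nat.factorial m))
      = ENNReal.ofReal x := by
  have hnn : ∀ m : ℕ, 0 ≤ Real.exp (-x) * x ^ m / (Nat.factorial m : ℝ) := fun m => by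
    positivity
  have h1 : ∀ m : ℕ, (m : ENNReal) * ENNReal.ofReal (Real.exp (-x) * x ^ m / (Nat.factorial m))
      = ENNReal.ofReal ((m:ℝ) * (Real.exp (-x) * x ^ m / (Nat.factorial m))) := by
    intro m
    rw [ENNReal.ofReal_mul (Nat.cast_nonneg m), ENNReal.ofReal_natCast]
  rw [tsum_congr h1]
  have hsumm : Summable (fun m : ℕ => (m:ℝ) * (Real.exp (-x) * x ^ m / (Nat.factorial m))) :=
    ((summable_id_mul x).mul_left (Real.exp (-x))).congr (fun m => by ring)
  rw [← ENNReal.ofReal_tsum_of_nonneg (fun m => mul_nonneg (Nat.cast_nonneg m) (hnn m)) hsumm]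
  congr 1
  calc ∑' m : ℕ, (m:ℝ) * (Real.exp (-x) * x ^ m / (Nat.factorial m))
      = ∑' m : ℕ, Real.exp (-x) * ((m:ℝ) * (x ^ m / (Nat.factorial m : ℝ))) :=
        tsum_congr fun m => by ring
  _ = Real.exp (-x) * (x * Real.exp x) := by rw [tsum_mul_left, tsum_id_mul]
  _ = x := by rw [Real.exp_neg]; field_simp

lemma tsum_ofReal_pois2 {x : ℝ} (hx : 0 ≤ x) :
    ∑' m : ℕ, (m : ENNReal)^2 * ENNReal.ofReal (Real.exp (-x) * x ^ m / (Nat.factorial m))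
      = ENNReal.ofReal (x^2 + x) := by
  have hnn : ∀ m : ℕ, 0 ≤ Real.exp (-x) * x ^ m / (Nat.factorial m : ℝ) := fun m => by
    positivity
  have h1 : ∀ m : ℕ, (m : ENNReal)^2 * ENNReal.ofReal (Real.exp (-x) * x ^ m / (Nat.factorial m))
      = ENNReal.ofReal ((m:ℝ)^2 * (Real.exp (-x) * x ^ m / (Nat.factorial m))) := by
    intro m
    rw [ENNReal.ofReal_mul (by positivity), ENNReal.ofReal_pow (Nat.cast_nonneg m),
      ENNReal.ofReal_natCast]
  rw [tsum_congr h1]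
  have hsumm : Summable (fun m : ℕ => (m:ℝ)^2 * (Real.exp (-x) * x ^ m / (Nat.factorial m))) :=
    ((summable_sq_mul x).mul_left (Real.exp (-x))).congr (fun m => by ring)
  rw [← ENNReal.ofReal_tsum_of_nonneg (fun m => mul_nonneg (by positivity) (hnn m)) hsumm]
  congr 1
  calc ∑' m : ℕ, (m:ℝ)^2 * (Real.exp (-x) * x ^ m / (Nat.factorial m))
      = ∑' m : ℕ, Real.exp (-x) * ((m:ℝ)^2 * (x ^ m / (Nat.factorial m : ℝ))) :=
        tsum_congr fun m => by ring
  _ = Real.exp (-x) * ((x^2 + x) * Real.exp x) := by rw [tsum_mul_left, tsum_sq_mul]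
  _ = x^2 + x := by rw [Real.exp_neg]; field_simp


end HawkesIVI

section Main
open HawkesIVI Filter Topology

/-- One-step moment identities of the Hawkes iVi scheme: if `ξ ~ IG(α/(1−k), (α/k)²)`,
`N̂ | ξ ~ Poisson(ξ)`, and `Λ̂ = α + k N̂`, then `E[N̂] = E[Λ̂] = α/(1−k)` and
`E[(N̂ − Λ̂)²] = (k² + (1−k)²) E[Λ̂]`. -/
theorem hawkes_ivi_one_step_moments
    (α k : ℝ) (hα : 0 < α) (hk0 : 0 < k) (hk1 : k < 1)
    {Ω : Type*} [MeasurableSpace Ω] (P : Measure Ω) [IsProbabilityMeasure P]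
    (ξ : Ω → ℝ) (Nh : Ω → ℕ) (hξ : Measurable ξ) (hNh : Measurable Nh)
    (hξlaw : Measure.map ξ P = invGaussianMeasure (α / (1 - k)) ((α / k) ^ 2))
    (hcond : ∀ (m : ℕ) (s : Set ℝ), MeasurableSet s →
      P {ω | ξ ω ∈ s ∧ Nh ω = m} =
        ∫⁻ x in s, ENNReal.ofReal (Real.exp (-x) * x ^ m / (Nat.factorial m))
          ∂(Measure.map ξ P))
    (Λh : Ω → ℝ) (hΛh : ∀ ω, Λh ω = α + k * (Nh ω : ℝ)) :
    (∫ ω, (Nh ω : ℝ) ∂P) = α / (1 - k) ∧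
    (∫ ω, Λh ω ∂P) = α / (1 - k) ∧
    (∫ ω, ((Nh ω : ℝ) - Λh ω) ^ 2 ∂P) = (k ^ 2 + (1 - k) ^ 2) * ∫ ω, Λh ω ∂P := by
  have h1k : (0:ℝ) < 1 - k := by linarith
  set μ0 : ℝ := α / (1 - k) with hμ0_def
  set lam0 : ℝ := (α / k) ^ 2 with hlam0_def
  have hm : 0 < μ0 := div_pos hα h1k
  have hl : 0 < lam0 := by positivity
  set ν : Measure ℝ := invGaussianMeasure μ0 lam0 with hν_def
  have hprob : ν univ = 1 := by
    have hpm : IsProbabilityMeasure (Measure.map ξ P) := Measure.isProbabilityMeasure_map hξ.aemeasurable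
    rw [hξlaw] at hpm
    exact hpm.measure_univ
  -- fiber decomposition
  have fiber : ∀ F : ℕ → ENNReal, ∫⁻ ω, F (Nh ω) ∂P = ∑' m : ℕ, F m * P {ω | Nh ω = m} := by
    intro F
    rw [← lintegral_map measurable_from_nat hNh, lintegral_countable' F]
    refine tsum_congr fun m => ?_
    rw [Measure.map_apply hNh (measurableSet_singleton m)]
    congr 1
  -- conditional Poisson law
  have hP_eq : ∀ m : ℕ, P {ω | Nh ω = m}
      = ∫⁻ x, ENNReal.ofReal (Real.exp (-x) * x ^ m / (Nat.factorial m)) ∂ν := by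
    intro m
    have h := hcond m univ MeasurableSet.univ
    simp only [mem_univ, true_and] at h
    rwa [Measure.restrict_univ, hξlaw] at h
  have hmeas : ∀ m : ℕ,
      Measurable (fun x : ℝ => ENNReal.ofReal (Real.exp (-x) * x ^ m / (Nat.factorial m))) := by
    intro m
    exact (((Real.measurable_exp.comp measurable_neg).mul
      (measurable_id.pow_const m)).div_const _).ennreal_ofReal
  have haeIoi : ∀ᵐ x ∂ν, x ∈ Ioi (0:ℝ) := by
    have h0 : ∀ᵐ x ∂(volume.restrict (Ioi (0:ℝ))), x ∈ Ioi (0:ℝ) :=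
      ae_restrict_mem measurableSet_Ioi
    exact Eventually.filter_mono ((withDensity_absolutelyContinuous _ _).ae_le) h0
  have hdensM : Measurable (fun x : ℝ => ENNReal.ofReal (invGaussianDensity μ0 lam0 x)) :=
    (measurable_dens μ0 lam0).ennreal_ofReal
  -- generic moment computation
  have key : ∀ F : ℕ → ENNReal, ∀ T : ℝ → ℝ,
      (∀ x : ℝ, 0 < x → (∑' m : ℕ, F m *
          ENNReal.ofReal (Real.exp (-x) * x ^ m / (Nat.factorial m))) = ENNReal.ofReal (T x)) →
      Measurable T →
      ∫⁻ ω, F (Nh ω) ∂P = ∫⁻ x in Ioi (0:ℝ),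
        ENNReal.ofReal (invGaussianDensity μ0 lam0 x) * ENNReal.ofReal (T x) := by
    intro F T hT hTm
    rw [fiber F]
    have h1 : ∀ m : ℕ, F m * P {ω | Nh ω = m}
        = ∫⁻ x, F m * ENNReal.ofReal (Real.exp (-x) * x ^ m / (Nat.factorial m)) ∂ν := by
      intro m
      rw [hP_eq m, lintegral_const_mul _ (hmeas m)]
    rw [tsum_congr h1, ← lintegral_tsum (fun m => ((hmeas m).const_mul _).aemeasurable)]
    have h2 : ∫⁻ x, (∑' m : ℕ, F m *
        ENNReal.ofReal (Real.exp (-x) * x ^ m / (Nat.factorial m))) ∂ν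
        = ∫⁻ x, ENNReal.ofReal (T x) ∂ν :=
      lintegral_congr_ae (haeIoi.mono fun x hx => hT x hx)
    rw [h2, hν_def, invGaussianMeasure,
      lintegral_withDensity_eq_lintegral_mul _ hdensM hTm.ennreal_ofReal]
    rfl
  -- first moment
  have L1 : ∫⁻ ω, (Nh ω : ENNReal) ∂P = ENNReal.ofReal μ0 := by
    rw [key (fun m => (m : ENNReal)) (fun x => x)
      (fun x hx => tsum_ofReal_pois1 hx.le) measurable_id]
    rw [← (igMoments hm hl hprob).1]
    refine setLIntegral_congr_fun measurableSet_Ioi (fun x hx => ?_)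
    rw [← ENNReal.ofReal_mul (dens_nonneg μ0 lam0 x)]
  -- second moment
  have L2 : ∫⁻ ω, (Nh ω : ENNReal)^2 ∂P = ENNReal.ofReal (μ0^3/lam0 + μ0^2 + μ0) := by
    rw [key (fun m => (m : ENNReal)^2) (fun x => x^2 + x)
      (fun x hx => tsum_ofReal_pois2 hx.le) ((measurable_id.pow_const 2).add measurable_id)]
    have h3 : ∫⁻ x in Ioi (0:ℝ),
        ENNReal.ofReal (invGaussianDensity μ0 lam0 x) * ENNReal.ofReal (x^2 + x)
        = ∫⁻ x in Ioi (0:ℝ), (ENNReal.ofReal (invGaussianDensity μ0 lam0 x * x^2)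
            + ENNReal.ofReal (invGaussianDensity μ0 lam0 x * x)) := by
      refine setLIntegral_congr_fun measurableSet_Ioi (fun x hx => ?_)
      rw [← ENNReal.ofReal_mul (dens_nonneg μ0 lam0 x), mul_add,
        ENNReal.ofReal_add (mul_nonneg (dens_nonneg μ0 lam0 x) (sq_nonneg x))
          (mul_nonneg (dens_nonneg μ0 lam0 x) hx.le)]
    have hfm : Measurable (fun x : ℝ => ENNReal.ofReal (invGaussianDensity μ0 lam0 x * x^2)) :=
      ((measurable_dens μ0 lam0).mul (measurable_id.pow_const 2)).ennreal_ofReal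
    rw [h3, lintegral_add_left hfm _,
      (igMoments hm hl hprob).1, (igMoments hm hl hprob).2,
      ← ENNReal.ofReal_add (by positivity) hm.le]
  -- Bochner versions
  have hNm : Measurable (fun ω => (Nh ω : ℝ)) := measurable_from_nat.comp hNh
  have hNint : Integrable (fun ω => (Nh ω : ℝ)) P := by
    refine ⟨hNm.aestronglyMeasurable, ?_⟩
    rw [hasFiniteIntegral_iff_ofReal (Eventually.of_forall fun ω => Nat.cast_nonneg _)]
    rw [lintegral_congr fun ω => ENNReal.ofReal_natCast (Nh ω), L1]
    exact ENNReal.ofReal_lt_top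
  have hN2m : Measurable (fun ω => (Nh ω : ℝ)^2) := hNm.pow_const 2
  have hN2int : Integrable (fun ω => (Nh ω : ℝ)^2) P := by
    refine ⟨hN2m.aestronglyMeasurable, ?_⟩
    rw [hasFiniteIntegral_iff_ofReal (Eventually.of_forall fun ω => by positivity)]
    rw [lintegral_congr fun ω => by
      rw [ENNReal.ofReal_pow (Nat.cast_nonneg _), ENNReal.ofReal_natCast], L2]
    exact ENNReal.ofReal_lt_top
  have hEN : ∫ ω, (Nh ω : ℝ) ∂P = μ0 := by
    rw [integral_eq_lintegral_of_nonneg_ae (Eventually.of_forall fun ω => Nat.cast_nonneg _)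
      hNm.aestronglyMeasurable]
    rw [lintegral_congr fun ω => ENNReal.ofReal_natCast (Nh ω), L1,
      ENNReal.toReal_ofReal hm.le]
  have hEN2 : ∫ ω, (Nh ω : ℝ)^2 ∂P = μ0^3/lam0 + μ0^2 + μ0 := by
    rw [integral_eq_lintegral_of_nonneg_ae (Eventually.of_forall fun ω => by positivity)
      hN2m.aestronglyMeasurable]
    rw [lintegral_congr fun ω => by
      rw [ENNReal.ofReal_pow (Nat.cast_nonneg _), ENNReal.ofReal_natCast], L2,
      ENNReal.toReal_ofReal (by positivity)]
  have g2 : ∫ ω, Λh ω ∂P = μ0 := by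
    simp only [hΛh]
    rw [integral_add (integrable_const α) (hNint.const_mul k), integral_const,
      integral_const_mul, hEN, probReal_univ]
    simp only [ENNReal.toReal_one, one_smul, smul_eq_mul]
    rw [hμ0_def]
    field_simp
    ring
  refine ⟨hEN, g2, ?_⟩
  have hptw : (fun ω => ((Nh ω : ℝ) - Λh ω)^2)
      = fun ω => (1-k)^2 * (Nh ω : ℝ)^2 - 2*α*(1-k) * (Nh ω : ℝ) + α^2 := by
    funext ω
    rw [hΛh ω]
    ring
  rw [hptw, g2]
  have i1 : Integrable (fun ω => (1-k)^2 * (Nh ω:ℝ)^2) P := hN2int.const_mul _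
  have i2 : Integrable (fun ω => 2*α*(1-k) * (Nh ω:ℝ)) P := hNint.const_mul _
  have i12 : Integrable (fun ω => (1-k)^2 * (Nh ω:ℝ)^2 - 2*α*(1-k) * (Nh ω:ℝ)) P := i1.sub i2
  rw [integral_add i12 (integrable_const _), integral_sub i1 i2,
    integral_const_mul, integral_const_mul, integral_const, probReal_univ, hEN, hEN2]
  simp only [ENNReal.toReal_one, one_smul, smul_eq_mul]
  rw [hμ0_def, hlam0_def]
  field_simp
  ring

end Main
end
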